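/- For a capacity w and an increasing function Λ: ℝ → (0,1), ΛVaR^w is cash-subadditive: for every random variable X and every m ≥ 0, ΛVaR^w(X + m) ≤ ΛVaR^w(X) + m. If instead Λ is decreasing, then ΛVaR^w is cash-supadditive: ΛVaR^w(X + m) ≥ ΛVaR^w(X) + m for all m ≥ 0. -/

import Mathlib

open Set

/-- Lambda Value-at-Risk of `X` with respect to a capacity `w` and function `Λ`:
`inf {x ∈ ℝ : w(X > x) ≤ Λ(x)}`, valued in the extended reals (`inf ∅ = ⊤`). -/
noncomputable def LVaR {Ω : Type*} (w : Set Ω → ℝ) (Λ : ℝ → ℝ) (X : Ω → ℝ) : EReal :=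
  sInf ((fun x : ℝ => (x : EReal)) '' {x : ℝ | w {ω | x < X ω} ≤ Λ x})

/-- If `Λ : ℝ → (0,1)` is increasing then `ΛVaR^w` is cash-subadditive:
`ΛVaR^w(X + m) ≤ ΛVaR^w(X) + m` for `m ≥ 0`; if `Λ` is decreasing then `ΛVaR^w`
is cash-supadditive: `ΛVaR^w(X + m) ≥ ΛVaR^w(X) + m` for `m ≥ 0`. -/
theorem stmt_2 {Ω : Type*} (w : Set Ω → ℝ)
    (hw_mono : ∀ A B : Set Ω, A ⊆ B → w A ≤ w B)
    (hw_empty : w (∅ : Set Ω) = 0) (hw_univ : w (univ : Set Ω) = 1)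
    (Λ : ℝ → ℝ) (hΛ : ∀ x, Λ x ∈ Ioo (0 : ℝ) 1) :
    (Monotone Λ → ∀ (X : Ω → ℝ) (m : ℝ), 0 ≤ m →
      LVaR w Λ (fun ω => X ω + m) ≤ LVaR w Λ X + (m : EReal)) ∧
    (Antitone Λ → ∀ (X : Ω → ℝ) (m : ℝ), 0 ≤ m →
      LVaR w Λ X + (m : EReal) ≤ LVaR w Λ (fun ω => X ω + m)) := by
  constructor
  · intro hmono X m hm
    rw [← EReal.sub_le_iff_le_add (.inl (EReal.coe_ne_bot m)) (.inl (EReal.coe_ne_top m))]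
    apply le_sInf
    rintro _ ⟨y, hy, rfl⟩
    rw [EReal.sub_le_iff_le_add (.inl (EReal.coe_ne_bot m)) (.inl (EReal.coe_ne_top m))]
    have : LVaR w Λ (fun ω => X ω + m) ≤ ((y + m : ℝ) : EReal) := by
      apply sInf_le
      refine ⟨y + m, ?_, rfl⟩
      simp only [mem_setOf_eq] at hy ⊢
      have hset : {ω | y + m < X ω + m} = {ω | y < X ω} := by
        ext ω; simp [add_lt_add_iff_right]
      rw [hset]
      exact hy.trans (hmono (by linarith))
    calc LVaR w Λ (fun ω => X ω + m) ≤ ((y + m : ℝ) : EReal) := this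
      _ = (y : EReal) + (m : EReal) := by norm_cast
  · intro hanti X m hm
    apply le_sInf
    rintro _ ⟨y, hy, rfl⟩
    have : LVaR w Λ X ≤ ((y - m : ℝ) : EReal) := by
      apply sInf_le
      refine ⟨y - m, ?_, rfl⟩
      simp only [mem_setOf_eq] at hy ⊢
      have hset : {ω | y - m < X ω} = {ω | y < X ω + m} := by
        ext ω; constructor <;> intro h <;> simp at h ⊢ <;> linarith
      rw [hset]
      exact hy.trans (hanti (by linarith))
    calc LVaR w Λ X + (m : EReal) ≤ ((y - m : ℝ) : EReal) + (m : EReal) :=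
          add_le_add_left this _
      _ = ((y - m + m : ℝ) : EReal) := by norm_cast
      _ = (y : EReal) := by norm_num
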